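/- arXiv:2106.08203 — 2 statements merged into one kernel-verified Lean document; each statement's English description precedes it below -/
import Mathlib

section
/- Every asymptotically periodic positive numerical function φ : ℕ → ℕ (with φ(t) ≥ 1 for all t) can be obtained from finitely many functions of Types A, B, and C using the operations φ ↦ φ − 1 (applied only when φ(t) ≥ 2 for all t) and (φ, ψ) ↦ φ + ψ − 1. -/
/-- A numerical function is asymptotically periodic if it is periodic for all
sufficiently large arguments. -/
def AsymptoticallyPeriodic (φ : ℕ → ℕ) : Prop :=
  ∃ N m, 0 < m ∧ ∀ t, N ≤ t → φ (t + m) = φ t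

/-- Type A functions: `1,…,1,2,2,2,…`. -/
def TypeA (φ : ℕ → ℕ) : Prop := ∃ N, ∀ t, φ t = if t < N then 1 else 2

/-- Type B functions: value `2` at exactly one position, `1` elsewhere. -/
def TypeB (φ : ℕ → ℕ) : Prop := ∃ N, ∀ t, φ t = if t = N then 2 else 1

/-- Type C functions: the constant function `1`, or a periodic function whose
period is of the form `1,…,1,2,1,…,1` (value `2` at exactly one position of each
period). -/
def TypeC (φ : ℕ → ℕ) : Prop :=
  (∀ t, φ t = 1) ∨
    ∃ m d, 0 < m ∧ d < m ∧ ∀ t, φ t = if t % m = d then 2 else 1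

/-- The class of functions generated from Types A, B, C by the operations
`φ ↦ φ − 1` (when `φ ≥ 2` everywhere) and `(φ, ψ) ↦ φ + ψ − 1`. -/
inductive Generated : (ℕ → ℕ) → Prop
  | base {φ : ℕ → ℕ} : TypeA φ ∨ TypeB φ ∨ TypeC φ → Generated φ
  | sub {φ : ℕ → ℕ} : Generated φ → (∀ t, 2 ≤ φ t) → Generated (fun t => φ t - 1)
  | add {φ ψ : ℕ → ℕ} : Generated φ → Generated ψ →
      Generated (fun t => φ t + ψ t - 1)

/-- `Gen1 f` : the function `1 + f` is generated. -/
def Gen1 (f : ℕ → ℕ) : Prop := Generated (fun t => f t + 1)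

lemma gen1_congr {f g : ℕ → ℕ} (hf : Gen1 f) (h : ∀ t, f t = g t) : Gen1 g := by
  have : f = g := funext h
  exact this ▸ hf

lemma gen1_zero : Gen1 (fun _ => 0) :=
  Generated.base (Or.inr (Or.inr (Or.inl fun _ => rfl)))

lemma gen1_add {f g : ℕ → ℕ} (hf : Gen1 f) (hg : Gen1 g) :
    Gen1 (fun t => f t + g t) := by
  show Generated (fun t => (f t + g t) + 1)
  have h := Generated.add hf hg
  have e : (fun t => (f t + 1) + (g t + 1) - 1) = fun t => (f t + g t) + 1 :=
    funext fun t => by omega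
  exact e ▸ h

lemma gen1_pred {f : ℕ → ℕ} (hf : Gen1 (fun t => f t + 1)) : Gen1 f := by
  show Generated (fun t => f t + 1)
  have h := Generated.sub hf (fun t => by show 2 ≤ f t + 1 + 1; omega)
  have e : (fun t => (f t + 1 + 1) - 1) = fun t => f t + 1 := funext fun t => by omega
  exact e ▸ h

lemma gen1_sub_const {f : ℕ → ℕ} : ∀ k, Gen1 (fun t => f t + k) → Gen1 f := by
  intro k
  induction k with
  | zero => intro h; exact gen1_congr h (fun t => by omega)
  | succ k ih =>
    intro h
    exact ih (gen1_pred (gen1_congr h (fun t => by omega)))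

lemma gen1_smul {f : ℕ → ℕ} (hf : Gen1 f) : ∀ k, Gen1 (fun t => k * f t) := by
  intro k
  induction k with
  | zero => exact gen1_congr gen1_zero (fun t => by ring)
  | succ k ih =>
    exact gen1_congr (gen1_add ih hf) (fun t => by ring)

lemma gen1_sum {ι : Type*} (s : Finset ι) (g : ι → ℕ → ℕ)
    (h : ∀ i ∈ s, Gen1 (g i)) : Gen1 (fun t => ∑ i ∈ s, g i t) := by
  classical
  induction s using Finset.induction_on with
  | empty => exact gen1_congr gen1_zero (fun t => by simp)
  | @insert a s' hni ih =>
    have h1 : Gen1 (g a) := h a (Finset.mem_insert_self a s')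
    have h2 : Gen1 (fun t => ∑ i ∈ s', g i t) :=
      ih (fun i hi => h i (Finset.mem_insert_of_mem hi))
    exact gen1_congr (gen1_add h1 h2) (fun t => by rw [Finset.sum_insert hni])

lemma gen1_point (N : ℕ) : Gen1 (fun t => if t = N then 1 else 0) := by
  show Generated (fun t => (if t = N then 1 else 0) + 1)
  have : (fun t => (if t = N then 1 else 0) + 1) = fun t => if t = N then 2 else 1 :=
    funext fun t => by split <;> rfl
  exact this ▸ Generated.base (Or.inr (Or.inl ⟨N, fun t => rfl⟩))

lemma gen1_step (N : ℕ) : Gen1 (fun t => if t < N then 0 else 1) := by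
  show Generated (fun t => (if t < N then 0 else 1) + 1)
  have : (fun t => (if t < N then 0 else 1) + 1) = fun t => if t < N then 1 else 2 :=
    funext fun t => by split <;> rfl
  exact this ▸ Generated.base (Or.inl ⟨N, fun t => rfl⟩)

lemma gen1_mod (m d : ℕ) (hm : 0 < m) (hd : d < m) :
    Gen1 (fun t => if t % m = d then 1 else 0) := by
  show Generated (fun t => (if t % m = d then 1 else 0) + 1)
  have : (fun t => (if t % m = d then 1 else 0) + 1) =
      fun t => if t % m = d then 2 else 1 := funext fun t => by split <;> rfl
  exact this ▸ Generated.base (Or.inr (Or.inr (Or.inr ⟨m, d, hm, hd, fun t => rfl⟩)))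

lemma per_shift {f : ℕ → ℕ} {N m : ℕ} (hper : ∀ t, N ≤ t → f (t + m) = f t) :
    ∀ k x, N ≤ x → f (x + k * m) = f x := by
  intro k
  induction k with
  | zero => intro x hx; simp
  | succ k ih =>
    intro x hx
    have : x + (k + 1) * m = (x + k * m) + m := by ring
    rw [this, hper _ (le_trans hx (Nat.le_add_right _ _)), ih x hx]

lemma per_eq {f : ℕ → ℕ} {N m : ℕ} (hm : 0 < m)
    (hper : ∀ t, N ≤ t → f (t + m) = f t)
    {x y : ℕ} (hx : N ≤ x) (hy : N ≤ y) (hxy : x % m = y % m) : f x = f y := by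
  set c := max (x / m) (y / m) with hc
  have key : ∀ z : ℕ, N ≤ z → z / m ≤ c → f z = f (z % m + c * m) := by
    intro z hz hzc
    have h1 : m * (z / m) + z % m = z := Nat.div_add_mod z m
    have h2 : z % m + c * m = z + (c - z / m) * m := by
      rw [Nat.sub_mul]
      have h3 : z / m * m ≤ c * m := Nat.mul_le_mul_right m hzc
      have h4 : z / m * m = m * (z / m) := Nat.mul_comm _ _
      omega
    rw [h2, per_shift hper _ _ hz]
  rw [key x hx (le_max_left _ _), key y hy (le_max_right _ _), hxy]

/-- Every asymptotically periodic positive numerical function is obtained from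
finitely many functions of Types A, B, C by the two operations. -/
theorem stmt_1 (φ : ℕ → ℕ) (hpos : ∀ t, 1 ≤ φ t)
    (hper : AsymptoticallyPeriodic φ) : Generated φ := by
  obtain ⟨N, m, hm, hp⟩ := hper
  set f : ℕ → ℕ := fun t => φ t - 1 with hf
  -- value of f on residue class r (for the tail)
  set vv : ℕ → ℕ := fun r => f (r % m + m * N) with hvv
  set V : ℕ := ∑ r ∈ Finset.range m, vv r with hV
  have hvvV : ∀ r, vv r ≤ V := by
    intro r
    have : vv (r % m) ≤ V := by
      apply Finset.single_le_sum (f := vv) (fun i _ => Nat.zero_le _)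
      exact Finset.mem_range.mpr (Nat.mod_lt _ hm)
    have : vv (r % m) = vv r := by
      simp only [hvv]
      rw [Nat.mod_mod_of_dvd r (dvd_refl m)]
    omega
  -- the three building blocks
  have g1 : Gen1 (fun t => ∑ r ∈ Finset.range m, vv r * (if t % m = r then 1 else 0)) :=
    gen1_sum _ _ (fun r hr =>
      gen1_smul (gen1_mod m r hm (Finset.mem_range.mp hr)) (vv r))
  have g2 : Gen1 (fun t => ∑ s ∈ Finset.range N,
      (f s + V - vv (s % m)) * (if t = s then 1 else 0)) :=
    gen1_sum _ _ (fun s _ => gen1_smul (gen1_point s) _)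
  have g3 : Gen1 (fun t => V * (if t < N then 0 else 1)) :=
    gen1_smul (gen1_step N) V
  have gE : Gen1 (fun t =>
      (∑ r ∈ Finset.range m, vv r * (if t % m = r then 1 else 0)) +
      ((∑ s ∈ Finset.range N, (f s + V - vv (s % m)) * (if t = s then 1 else 0)) +
        V * (if t < N then 0 else 1))) :=
    gen1_add g1 (gen1_add g2 g3)
  -- evaluate the three sums
  have sum1 : ∀ t, (∑ r ∈ Finset.range m, vv r * (if t % m = r then 1 else 0)) = vv (t % m) := by
    intro t
    have : ∀ r, vv r * (if t % m = r then 1 else 0) = if t % m = r then vv r else 0 := by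
      intro r; split <;> simp
    simp only [this]
    rw [Finset.sum_ite_eq]
    simp [Finset.mem_range.mpr (Nat.mod_lt _ hm)]
  have sum2 : ∀ t, (∑ s ∈ Finset.range N,
      (f s + V - vv (s % m)) * (if t = s then 1 else 0)) =
      if t < N then f t + V - vv (t % m) else 0 := by
    intro t
    have : ∀ s, (f s + V - vv (s % m)) * (if t = s then 1 else 0) =
        if t = s then f s + V - vv (s % m) else 0 := by
      intro s; split <;> simp
    simp only [this]
    rw [Finset.sum_ite_eq]
    simp [Finset.mem_range]
  -- the combination equals f + V
  have hEval : ∀ t,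
      (∑ r ∈ Finset.range m, vv r * (if t % m = r then 1 else 0)) +
      ((∑ s ∈ Finset.range N, (f s + V - vv (s % m)) * (if t = s then 1 else 0)) +
        V * (if t < N then 0 else 1)) = f t + V := by
    intro t
    rw [sum1, sum2]
    by_cases ht : t < N
    · simp only [if_pos ht]
      have := hvvV (t % m)
      omega
    · simp only [if_neg ht]
      push_neg at ht
      have htail : f t = vv (t % m) := by
        have hy : N ≤ t % m + m * N := le_trans (Nat.le_mul_of_pos_left N hm) (Nat.le_add_left _ _)
        have hmod : (t % m + m * N) % m = t % m := by
          rw [Nat.add_mul_mod_self_left, Nat.mod_mod_of_dvd t (dvd_refl m)]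
        have hφ : φ t = φ (t % m + m * N) := per_eq hm hp ht hy hmod.symm
        have h5 : vv (t % m) = f (t % m + m * N) := by
          simp only [hvv]
          rw [Nat.mod_mod_of_dvd t (dvd_refl m)]
        rw [h5]
        simp only [hf]
        rw [hφ]
      omega
  have gfV : Gen1 (fun t => f t + V) := gen1_congr gE hEval
  have gf : Gen1 f := gen1_sub_const V gfV
  have : (fun t => f t + 1) = φ := funext fun t => by
    have := hpos t
    show φ t - 1 + 1 = φ t
    omega
  exact this ▸ gf
end

section
/- Let A = k[x₁,...,xₘ] and B = k[y₁,...,yₙ] be polynomial rings over a field k with disjoint sets of variables, regarded inside R = k[x₁,...,xₘ,y₁,...,yₙ]. If I ⊆ A and J ⊆ B are nonzero proper homogeneous ideals, then the extensions of I and J to R satisfy IR ∩ JR = (IR)(JR). -/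
open MvPolynomial

/-- The maximal homogeneous ideal of a polynomial ring. -/
noncomputable def maxIdeal (k : Type*) [Field k] (σ : Type*) :
    Ideal (MvPolynomial σ k) :=
  Ideal.span (Set.range (MvPolynomial.X : σ → MvPolynomial σ k))

/-- The depth of an `S`-module `M` with respect to an ideal `m`: the supremum of
lengths of `M`-regular sequences with entries in `m`. -/
noncomputable def idealDepth {S : Type*} [CommRing S] (m : Ideal S)
    (M : Type*) [AddCommGroup M] [Module S M] : ℕ :=
  sSup {r : ℕ | ∃ rs : List S, rs.length = r ∧ (∀ x ∈ rs, x ∈ m) ∧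
    RingTheory.Sequence.IsRegular M rs}

/-- `depth S/Q` for a polynomial ring `S` and ideal `Q`, w.r.t. the maximal
homogeneous ideal. -/
noncomputable def pdepth {k : Type*} [Field k] {σ : Type*}
    (Q : Ideal (MvPolynomial σ k)) : ℕ :=
  idealDepth (maxIdeal k σ) (MvPolynomial σ k ⧸ Q)

/-- A monomial ideal. -/
def IsMonomialIdeal {k : Type*} [CommSemiring k] {σ : Type*}
    (I : Ideal (MvPolynomial σ k)) : Prop :=
  ∃ s : Set (σ →₀ ℕ), I = Ideal.span ((fun d => MvPolynomial.monomial d (1 : k)) '' s)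

/-- A homogeneous ideal: one generated by homogeneous polynomials. -/
def IsHomogeneousIdeal {k : Type*} [CommSemiring k] {σ : Type*}
    (I : Ideal (MvPolynomial σ k)) : Prop :=
  ∃ s : Set (MvPolynomial σ k), (∀ p ∈ s, ∃ d, MvPolynomial.IsHomogeneous p d) ∧
    I = Ideal.span s

/-- The `t`-th symbolic power of an ideal `Q`: the intersection of the
contractions of `Qᵗ` localized at the minimal primes of `Q`. -/
noncomputable def symbolicPower {S : Type*} [CommRing S] (Q : Ideal S) (t : ℕ) :
    Ideal S :=
  ⨅ p : {p : Ideal S // p ∈ Q.minimalPrimes},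
    haveI : p.1.IsPrime := p.2.1.1
    ((Q ^ t).map (algebraMap S (Localization.AtPrime p.1))).comap
      (algebraMap S (Localization.AtPrime p.1))

/-- Auxiliary: extensions of `I` and `J` to `k[x][y]` satisfy `IR ⊓ JR ≤ IR*JR`. -/
theorem inf_le_mul_of_split {k : Type*} [Field k] {σ τ : Type*}
    (I : Ideal (MvPolynomial σ k)) (J : Ideal (MvPolynomial τ k)) :
    Ideal.map (C : MvPolynomial σ k →+* MvPolynomial τ (MvPolynomial σ k)) I ⊓
      Ideal.map (MvPolynomial.map (C : k →+* MvPolynomial σ k)) J ≤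
    Ideal.map (C : MvPolynomial σ k →+* MvPolynomial τ (MvPolynomial σ k)) I *
      Ideal.map (MvPolynomial.map (C : k →+* MvPolynomial σ k)) J := by
  classical
  set A := MvPolynomial σ k
  obtain ⟨q, hq⟩ := Submodule.exists_isCompl (Submodule.restrictScalars k (I : Submodule A A))
  set π : A →ₗ[k] A :=
    (Submodule.restrictScalars k (I : Submodule A A)).subtype ∘ₗ
      Submodule.projectionOnto _ q hq with hπdef
  have hπmem : ∀ a, π a ∈ I := fun a =>
    (Submodule.projectionOnto _ q hq a).2
  have hπid : ∀ a ∈ I, π a = a := by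
    intro a ha
    have := Submodule.linearProjOfIsCompl_apply_left hq
      (⟨a, ha⟩ : Submodule.restrictScalars k (I : Submodule A A))
    simp only [hπdef, LinearMap.comp_apply, Submodule.subtype_apply]
    rw [show a = ((⟨a, ha⟩ : Submodule.restrictScalars k (I : Submodule A A)) : A) from rfl]
    rw [this]
  set Φ : MvPolynomial τ A → MvPolynomial τ A :=
    fun f => AddMonoidAlgebra.ofCoeff (Finsupp.mapRange ⇑π π.map_zero (AddMonoidAlgebra.coeff f)) with hΦdef
  have hcoeff : ∀ (f : MvPolynomial τ A) (d), coeff d (Φ f) = π (coeff d f) := by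
    intro f d
    exact Finsupp.mapRange_apply (hf := π.map_zero)
  set P : Ideal (MvPolynomial τ A) := Ideal.map (C : A →+* MvPolynomial τ A) I with hP
  set Q : Ideal (MvPolynomial τ A) :=
    Ideal.map (MvPolynomial.map (C : k →+* A)) J with hQ
  have hΦP : ∀ f, Φ f ∈ P := by
    intro f
    refine mem_map_C_iff.2 fun d => ?_
    rw [hcoeff]; exact hπmem _
  have hfix : ∀ f ∈ P, Φ f = f := by
    intro f hf
    apply MvPolynomial.ext
    intro d
    rw [hcoeff, hπid _ (mem_map_C_iff.1 hf d)]
  have hmul : ∀ (r : MvPolynomial τ A) (b : MvPolynomial τ k),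
      Φ (r * MvPolynomial.map (C : k →+* A) b) = Φ r * MvPolynomial.map (C : k →+* A) b := by
    intro r b
    apply MvPolynomial.ext
    intro d
    rw [hcoeff, coeff_mul, coeff_mul, map_sum]
    refine Finset.sum_congr rfl fun x _ => ?_
    rw [hcoeff, coeff_map, mul_comm, ← smul_eq_C_mul, map_smul, smul_eq_C_mul,
      mul_comm]
  intro f hf
  obtain ⟨hfP, hfQ⟩ := hf
  have hspan : f ∈ Submodule.span (MvPolynomial τ A)
      ((MvPolynomial.map (C : k →+* A)) '' (J : Set (MvPolynomial τ k))) := hfQ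
  have key : ∀ r : MvPolynomial τ A, Φ (r * f) ∈ P * Q := by
    refine Submodule.span_induction ?_ ?_ ?_ ?_ hspan
    · rintro _ ⟨b, hb, rfl⟩ r
      rw [hmul]
      exact Ideal.mul_mem_mul (hΦP r) (Ideal.mem_map_of_mem _ hb)
    · intro r
      have h0 : Φ 0 = 0 := by
        apply MvPolynomial.ext; intro d; rw [hcoeff]; simp
      rw [mul_zero, h0]; exact zero_mem _
    · intro x y hx hy ihx ihy r
      have hadd : Φ (r * x + r * y) = Φ (r * x) + Φ (r * y) := by
        apply MvPolynomial.ext; intro d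
        rw [hcoeff, coeff_add, coeff_add, hcoeff, hcoeff, map_add]
      rw [mul_add, hadd]
      exact add_mem (ihx r) (ihy r)
    · intro s x hx ih r
      rw [smul_eq_mul, ← mul_assoc]
      exact ih (r * s)
  have := key 1
  rwa [one_mul, hfix f hfP] at this

/-- If `I ⊆ A = k[x₁,…,xₘ]` and `J ⊆ B = k[y₁,…,yₙ]` are nonzero proper
homogeneous ideals in polynomial rings with disjoint variables, then in
`R = A ⊗_k B` one has `IR ∩ JR = (IR)(JR)`. -/
theorem stmt_2 (k : Type*) [Field k] (m n : ℕ)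
    (I : Ideal (MvPolynomial (Fin m) k)) (J : Ideal (MvPolynomial (Fin n) k))
    (hIhom : IsHomogeneousIdeal I) (hJhom : IsHomogeneousIdeal J)
    (hI0 : I ≠ ⊥) (hI1 : I ≠ ⊤) (hJ0 : J ≠ ⊥) (hJ1 : J ≠ ⊤) :
    Ideal.map (MvPolynomial.rename (Sum.inl : Fin m → Fin m ⊕ Fin n)) I ⊓
        Ideal.map (MvPolynomial.rename (Sum.inr : Fin n → Fin m ⊕ Fin n)) J =
      Ideal.map (MvPolynomial.rename (Sum.inl : Fin m → Fin m ⊕ Fin n)) I *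
        Ideal.map (MvPolynomial.rename (Sum.inr : Fin n → Fin m ⊕ Fin n)) J := by
  classical
  set A := MvPolynomial (Fin m) k
  set S := MvPolynomial (Fin n) A
  set e : MvPolynomial (Fin m ⊕ Fin n) k ≃+* S :=
    ((renameEquiv k (Equiv.sumComm (Fin m) (Fin n))).trans
      (sumAlgEquiv k (Fin n) (Fin m))).toRingEquiv with he
  set L1 : Ideal (MvPolynomial (Fin m ⊕ Fin n) k) :=
    Ideal.map (MvPolynomial.rename (Sum.inl : Fin m → Fin m ⊕ Fin n)) I with hL1
  set L2 : Ideal (MvPolynomial (Fin m ⊕ Fin n) k) :=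
    Ideal.map (MvPolynomial.rename (Sum.inr : Fin n → Fin m ⊕ Fin n)) J with hL2
  set P : Ideal S := Ideal.map (C : A →+* S) I with hPd
  set Q : Ideal S := Ideal.map (MvPolynomial.map (C : k →+* A)) J with hQd
  have hL1' : L1 = Ideal.map ((rename (Sum.inl : Fin m → Fin m ⊕ Fin n)).toRingHom) I := rfl
  have hL2' : L2 = Ideal.map ((rename (Sum.inr : Fin n → Fin m ⊕ Fin n)).toRingHom) J := rfl
  have h1 : Ideal.map (e : MvPolynomial (Fin m ⊕ Fin n) k →+* S) L1 = P := by
    rw [hL1', Ideal.map_map, hPd]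
    congr 1
    apply MvPolynomial.ringHom_ext <;> intros <;>
      simp [e, sumAlgEquiv_C_inl, sumAlgEquiv_X_inl, sumAlgEquiv_X_inr, sumRingEquiv, mvPolynomialEquivMvPolynomial, sumToIter_C,
        sumToIter_Xl, sumToIter_Xr, MvPolynomial.map_C, MvPolynomial.map_X]
    · exact sumAlgEquiv_C_inl k (Fin n) (Fin m) _
    · exact sumAlgEquiv_X_inr k (Fin n) (Fin m) _
  have h2 : Ideal.map (e : MvPolynomial (Fin m ⊕ Fin n) k →+* S) L2 = Q := by
    rw [hL2', Ideal.map_map, hQd]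
    congr 1
    apply MvPolynomial.ringHom_ext
    · intro r
      simp only [RingHom.comp_apply]
      rw [MvPolynomial.map_C]
      simp [e, sumAlgEquiv_C_inl, sumAlgEquiv_X_inl, sumAlgEquiv_X_inr, sumRingEquiv, mvPolynomialEquivMvPolynomial, sumToIter_C]
      exact sumAlgEquiv_C_inl k (Fin n) (Fin m) _
    · intro i
      simp only [RingHom.comp_apply]
      rw [MvPolynomial.map_X]
      simp [e, sumAlgEquiv_C_inl, sumAlgEquiv_X_inl, sumAlgEquiv_X_inr, sumRingEquiv, mvPolynomialEquivMvPolynomial, sumToIter_Xl,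
        sumToIter_Xr]
      exact sumAlgEquiv_X_inl k (Fin n) (Fin m) _
  have hPQ : P ⊓ Q = P * Q := le_antisymm (inf_le_mul_of_split I J) Ideal.mul_le_inf
  have hmap : Ideal.map (e : MvPolynomial (Fin m ⊕ Fin n) k →+* S) (L1 ⊓ L2) =
      Ideal.map (e : MvPolynomial (Fin m ⊕ Fin n) k →+* S) (L1 * L2) := by
    calc Ideal.map (e : _ →+* _) (L1 ⊓ L2)
        = Ideal.comap e.symm (L1 ⊓ L2) := Ideal.map_comap_of_equiv e
      _ = Ideal.comap e.symm L1 ⊓ Ideal.comap e.symm L2 := by rw [Ideal.comap_inf]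
      _ = Ideal.map (e : _ →+* _) L1 ⊓ Ideal.map (e : _ →+* _) L2 := by
          rw [← Ideal.map_comap_of_equiv, ← Ideal.map_comap_of_equiv]
      _ = P ⊓ Q := by rw [h1, h2]
      _ = P * Q := hPQ
      _ = Ideal.map (e : _ →+* _) L1 * Ideal.map (e : _ →+* _) L2 := by rw [h1, h2]
      _ = Ideal.map (e : _ →+* _) (L1 * L2) := (Ideal.map_mul _ _ _).symm
  have hinj : ∀ X : Ideal (MvPolynomial (Fin m ⊕ Fin n) k),
      Ideal.map (e.symm : S →+* MvPolynomial (Fin m ⊕ Fin n) k)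
        (Ideal.map (e : MvPolynomial (Fin m ⊕ Fin n) k →+* S) X) = X := by
    intro X
    rw [Ideal.map_map]
    simp
  calc L1 ⊓ L2 = Ideal.map (e.symm : S →+* _)
        (Ideal.map (e : _ →+* S) (L1 ⊓ L2)) := (hinj _).symm
    _ = Ideal.map (e.symm : S →+* _) (Ideal.map (e : _ →+* S) (L1 * L2)) := by rw [hmap]
    _ = L1 * L2 := hinj _
end
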